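/- Second characterization of 𝓜 (necessity): If U ∈ 𝓜 with index ρ_U, then κ_U = -ρ_U, where κ_U = sup{ r ∈ ℝ : ∫_1^∞ x^{r-1} U(x) dx < ∞ }. -/

import Mathlib

open Filter Real MeasureTheory Set

/-- `U ∈ 𝓜` with index `ρ`: positive and measurable on `(0,∞)`, bounded on finite
intervals, and for all `ε > 0`, `U(x)/x^(ρ+ε) → 0` and `U(x)/x^(ρ-ε) → ∞`. -/
def MemM (U : ℝ → ℝ) (ρ : ℝ) : Prop :=
  (∀ x, 0 < x → 0 < U x) ∧ Measurable U ∧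
  (∀ b, 0 < b → ∃ C, ∀ x, 0 < x → x ≤ b → U x ≤ C) ∧
  ∀ ε : ℝ, 0 < ε →
    Tendsto (fun x => U x / x ^ (ρ + ε)) atTop (nhds 0) ∧
    Tendsto (fun x => U x / x ^ (ρ - ε)) atTop atTop

theorem memM_index_isLUB (U : ℝ → ℝ) (ρ : ℝ) (hU : MemM U ρ) :
    IsLUB {r : ℝ | IntegrableOn (fun x => x ^ (r - 1) * U x) (Set.Ioi 1)} (-ρ) := by
  obtain ⟨hpos, hmeas, hbdd, hlim⟩ := hU
  constructor
  · -- upper bound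
    intro r hr
    simp only [mem_setOf_eq] at hr
    by_contra hcon
    push_neg at hcon
    -- r > -ρ
    set ε := (r + ρ) / 2 with hε
    have hε0 : 0 < ε := by
      have : -ρ < r := hcon
      simp only [hε]; linarith
    obtain ⟨-, htop⟩ := hlim ε hε0
    obtain ⟨X, hX⟩ := (htop.eventually_ge_atTop 1).exists_forall_of_atTop
    set Y := max X 2 with hY
    have hY1 : (1 : ℝ) < Y := lt_of_lt_of_le one_lt_two (le_max_right _ _)
    have hY0 : (0 : ℝ) < Y := lt_trans one_pos hY1
    -- on (Y, ∞), U x ≥ x ^ (ρ - ε)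
    have key : ∀ x ∈ Ioi Y, x ^ ((r + ρ) / 2 - 1) ≤ x ^ (r - 1) * U x := by
      intro x hx
      have hxY : Y < x := hx
      have hx0 : 0 < x := lt_trans hY0 hxY
      have h1 : 1 ≤ U x / x ^ (ρ - ε) := hX x (le_of_lt (lt_of_le_of_lt (le_max_left _ _) hxY))
      have hp : 0 < x ^ (ρ - ε) := rpow_pos_of_pos hx0 _
      have hUx : x ^ (ρ - ε) ≤ U x := by
        rw [le_div_iff₀ hp, one_mul] at h1; exact h1
      calc x ^ ((r + ρ) / 2 - 1) = x ^ (r - 1) * x ^ (ρ - ε) := by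
            rw [← rpow_add hx0, hε]; ring_nf
        _ ≤ x ^ (r - 1) * U x :=
            mul_le_mul_of_nonneg_left hUx (le_of_lt (rpow_pos_of_pos hx0 _))
    have hint : IntegrableOn (fun x => x ^ ((r + ρ) / 2 - 1)) (Ioi Y) := by
      apply Integrable.mono' (hr.mono_set (Ioi_subset_Ioi (le_of_lt hY1)))
      · exact (by fun_prop : Measurable fun x : ℝ => x ^ ((r + ρ) / 2 - 1)).aestronglyMeasurable
      · rw [ae_restrict_iff' measurableSet_Ioi]
        filter_upwards with x hx
        have hx0 : 0 < x := lt_trans hY0 hx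
        rw [Real.norm_eq_abs, abs_of_pos (rpow_pos_of_pos hx0 _)]
        exact key x hx
    rw [integrableOn_Ioi_rpow_iff hY0] at hint
    have : 0 < (r + ρ) / 2 := hε0
    linarith
  · -- least upper bound
    intro b hb
    by_contra hcon
    push_neg at hcon
    set ε := (-ρ - b) with hεdef
    have hε0 : 0 < ε := by simp only [hεdef]; linarith
    -- show b + ε/2 ∈ S, contradicting hb since b + ε/2 > b
    set r := b + ε / 2 with hr
    have hmem : r ∈ {r : ℝ | IntegrableOn (fun x => x ^ (r - 1) * U x) (Set.Ioi 1)} := by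
      simp only [mem_setOf_eq]
      obtain ⟨hzero, -⟩ := hlim (ε / 4) (by linarith)
      obtain ⟨X, hX⟩ := (hzero.eventually_lt_const zero_lt_one).exists_forall_of_atTop
      set Y := max X 2 with hY
      have hY1 : (1 : ℝ) < Y := lt_of_lt_of_le one_lt_two (le_max_right _ _)
      have hY0 : (0 : ℝ) < Y := lt_trans one_pos hY1
      have hfm : Measurable (fun x : ℝ => x ^ (r - 1) * U x) := by
        exact ((by fun_prop : Measurable fun x : ℝ => x ^ (r - 1))).mul hmeas
      have h1 : IntegrableOn (fun x => x ^ (r - 1) * U x) (Ioc 1 Y) := by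
        obtain ⟨C, hC⟩ := hbdd Y hY0
        have hC0 : 0 < C := lt_of_lt_of_le (hpos 1 one_pos) (hC 1 one_pos (le_of_lt hY1))
        apply Integrable.mono' (g := fun _ => Y ^ |r - 1| * C)
          ((integrableOn_const_iff (by finiteness)).mpr (Or.inr measure_Ioc_lt_top))
        · exact hfm.aestronglyMeasurable
        · rw [ae_restrict_iff' measurableSet_Ioc]
          filter_upwards with x hx
          have hx1 : 1 < x := hx.1
          have hx0 : 0 < x := lt_trans one_pos hx1
          have hUpos := hpos x hx0
          rw [Real.norm_eq_abs, abs_of_pos (mul_pos (rpow_pos_of_pos hx0 _) hUpos)]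
          have hxp : x ^ (r - 1) ≤ Y ^ |r - 1| := by
            calc x ^ (r - 1) ≤ x ^ |r - 1| :=
                  rpow_le_rpow_of_exponent_le (le_of_lt hx1) (le_abs_self _)
              _ ≤ Y ^ |r - 1| :=
                  rpow_le_rpow (le_of_lt hx0) hx.2 (abs_nonneg _)
          exact mul_le_mul hxp (hC x hx0 hx.2) (le_of_lt hUpos)
            (le_of_lt (rpow_pos_of_pos hY0 _))
      have h2 : IntegrableOn (fun x => x ^ (r - 1) * U x) (Ioi Y) := by
        have hexp : r - 1 + (ρ + ε / 4) < -1 := by simp only [hr, hεdef]; linarith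
        apply Integrable.mono' (g := fun x => x ^ (r - 1 + (ρ + ε / 4)))
          (integrableOn_Ioi_rpow_of_lt hexp hY0)
        · exact hfm.aestronglyMeasurable
        · rw [ae_restrict_iff' measurableSet_Ioi]
          filter_upwards with x hx
          have hx0 : 0 < x := lt_trans hY0 hx
          have hUpos := hpos x hx0
          rw [Real.norm_eq_abs, abs_of_pos (mul_pos (rpow_pos_of_pos hx0 _) hUpos)]
          have hsmall : U x ≤ x ^ (ρ + ε / 4) := by
            have := hX x (le_of_lt (lt_of_le_of_lt (le_max_left _ _) hx))
            have hp : 0 < x ^ (ρ + ε / 4) := rpow_pos_of_pos hx0 _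
            rw [div_lt_iff₀ hp, one_mul] at this
            linarith
          calc x ^ (r - 1) * U x ≤ x ^ (r - 1) * x ^ (ρ + ε / 4) :=
                mul_le_mul_of_nonneg_left hsmall (le_of_lt (rpow_pos_of_pos hx0 _))
            _ = x ^ (r - 1 + (ρ + ε / 4)) := (rpow_add hx0 _ _).symm
      have := h1.union h2
      rwa [Ioc_union_Ioi_eq_Ioi (le_of_lt hY1)] at this
    have := hb hmem
    simp only [hr] at this
    linarith
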